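/- Let K be a field of characteristic zero, let I be an ideal of R = K[x₁,…,xₙ], let b ≥ 1 be an integer and let p ∈ Kⁿ. Then Δ^{b−1}(I) ⊆ m_p if and only if I ⊆ m_p^b. (Hence the singular locus of the ideal-type singularity (I,b), defined as the zero set of Δ^{b−1}(I), is exactly the set of points at which the order of I is at least b.) -/

import Mathlib

/-- The maximal ideal `m_p` of polynomials vanishing at the point `p ∈ Kⁿ`. -/
noncomputable def vanishingIdeal {K : Type*} [Field K] {n : ℕ} (p : Fin n → K) :
    Ideal (MvPolynomial (Fin n) K) :=
  RingHom.ker (MvPolynomial.eval p)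

/-- The operator `Δ`: the ideal generated by `I` together with all first order
partial derivatives of elements of `I`. -/
noncomputable def deltaOp {K : Type*} [Field K] {n : ℕ}
    (I : Ideal (MvPolynomial (Fin n) K)) : Ideal (MvPolynomial (Fin n) K) :=
  I ⊔ Ideal.span {g | ∃ f ∈ I, ∃ i : Fin n, g = MvPolynomial.pderiv i f}

section Aux

open MvPolynomial

variable {K : Type*} [Field K] {n : ℕ}

/-- Differentiation drops power of an ideal by one. -/
lemma pderiv_mem_pow (J : Ideal (MvPolynomial (Fin n) K)) (i : Fin n) :
    ∀ (c : ℕ) (f : MvPolynomial (Fin n) K), f ∈ J ^ (c + 1) → pderiv i f ∈ J ^ c := by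
  intro c
  induction c with
  | zero => intro f _; simp [Ideal.one_eq_top]
  | succ c ih =>
    intro f hf
    rw [pow_succ] at hf
    refine Submodule.mul_induction_on hf ?_ ?_
    · intro g hg h hh
      rw [pderiv_mul]
      refine add_mem ?_ ?_
      · rw [pow_succ]
        exact Ideal.mul_mem_mul (ih g hg) hh
      · exact Ideal.mul_mem_right _ _ hg
    · intro x y hx hy
      rw [map_add]; exact add_mem hx hy

lemma degree_add (a b : Fin n →₀ ℕ) : (a + b).degree = a.degree + b.degree := by
  simp [Finsupp.degree_eq_weight_one, map_add]

lemma degree_single (i : Fin n) (e : ℕ) : (Finsupp.single i e).degree = e := by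
  rcases eq_or_ne e 0 with rfl | he
  · simp
  · exact Finsupp.degree_single i e

lemma monomial_mem_pow_span_X (r : K) (α : Fin n →₀ ℕ) :
    (monomial α r : MvPolynomial (Fin n) K) ∈
      Ideal.span (Set.range (X : Fin n → MvPolynomial (Fin n) K)) ^ α.degree := by
  induction α using Finsupp.induction with
  | zero => simp [Ideal.one_eq_top]
  | single_add i e s his he ih =>
    have h1 : (monomial (Finsupp.single i e + s) r : MvPolynomial (Fin n) K)
        = X i ^ e * monomial s r := by
      rw [X_pow_eq_monomial, monomial_mul, one_mul]
    rw [h1, degree_add, degree_single, pow_add]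
    exact Ideal.mul_mem_mul (Ideal.pow_mem_pow (Ideal.subset_span (Set.mem_range_self i)) e) ih

lemma mem_pow_span_X_iff (c : ℕ) (f : MvPolynomial (Fin n) K) :
    f ∈ Ideal.span (Set.range (X : Fin n → MvPolynomial (Fin n) K)) ^ c ↔
      ∀ α ∈ f.support, c ≤ α.degree := by
  classical
  constructor
  · induction c generalizing f with
    | zero => intro _ α _; exact Nat.zero_le _
    | succ c ih =>
      intro hf
      rw [pow_succ] at hf
      refine Submodule.mul_induction_on hf ?_ ?_
      · intro g hg h hh α hα
        have hα' := MvPolynomial.support_mul g h hα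
        simp only [Finset.mem_add] at hα'
        obtain ⟨β, hβ, γ, hγ, rfl⟩ := hα'
        have h1 : c ≤ β.degree := ih g hg β hβ
        have h2 : 1 ≤ γ.degree := by
          have := (mem_ideal_span_X_image (s := (Set.univ : Set (Fin n)))).1
            (by simpa using hh) γ hγ
          obtain ⟨j, -, hj⟩ := this
          calc 1 ≤ γ j := Nat.one_le_iff_ne_zero.2 hj
          _ ≤ γ.degree := Finsupp.le_degree j γ
        rw [degree_add]; omega
      · intro x y hx hy α hα
        rcases Finset.mem_union.1 (Finsupp.support_add hα) with h | h
        · exact hx α h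
        · exact hy α h
  · intro h
    rw [MvPolynomial.as_sum f]
    refine Ideal.sum_mem _ fun α hα => ?_
    exact Ideal.pow_le_pow_right (h α hα) (monomial_mem_pow_span_X _ α)

lemma coeff_pderiv (i : Fin n) (β : Fin n →₀ ℕ) (f : MvPolynomial (Fin n) K) :
    coeff β (pderiv i f) = (β i + 1 : ℕ) * coeff (β + Finsupp.single i 1) f := by
  classical
  induction f using MvPolynomial.induction_on' with
  | monomial s a =>
    rw [pderiv_monomial]
    by_cases h0 : s i = 0
    · have hne : s ≠ β + Finsupp.single i 1 := by
        rintro rfl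
        rw [Finsupp.add_apply, Finsupp.single_eq_same] at h0
        omega
      simp [h0, coeff_monomial, hne]
    · have hle : Finsupp.single i 1 ≤ s := Finsupp.single_le_iff.2 (by omega)
      have key : s - Finsupp.single i 1 = β ↔ s = β + Finsupp.single i 1 := by
        constructor
        · intro h; rw [← h, tsub_add_cancel_of_le hle]
        · intro h; rw [h, add_tsub_cancel_right]
      rw [coeff_monomial, coeff_monomial]
      by_cases h2 : s = β + Finsupp.single i 1
      · rw [if_pos (key.2 h2), if_pos h2]
        have hsi : s i = β i + 1 := by
          rw [h2, Finsupp.add_apply, Finsupp.single_eq_same]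
        rw [hsi]; push_cast; ring
      · rw [if_neg (fun hh => h2 (key.1 hh)), if_neg h2, mul_zero]
  | add p q hp hq => simp [map_add, hp, hq, mul_add]

lemma spanX_eq_vanishing :
    Ideal.span (Set.range (X : Fin n → MvPolynomial (Fin n) K)) = _root_.vanishingIdeal 0 := by
  ext f
  rw [_root_.vanishingIdeal, RingHom.mem_ker, eval_zero, constantCoeff_eq]
  have := mem_ideal_span_X_image (x := f) (s := (Set.univ : Set (Fin n)))
  rw [Set.image_univ] at this
  rw [this]
  constructor
  · intro h
    by_contra hc
    obtain ⟨j, -, hj⟩ := h 0 (by simpa [MvPolynomial.mem_support_iff] using hc)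
    simp at hj
  · intro h m hm
    by_contra hc
    push_neg at hc
    have : m = 0 := by ext j; simpa using hc j
    rw [MvPolynomial.mem_support_iff, this] at hm
    exact hm h

/-- Key lemma at the origin. -/
lemma key_zero [CharZero K] (c : ℕ) (f : MvPolynomial (Fin n) K) :
    f ∈ _root_.vanishingIdeal (0 : Fin n → K) ^ (c + 1) ↔
      coeff 0 f = 0 ∧ ∀ i, pderiv i f ∈ _root_.vanishingIdeal (0 : Fin n → K) ^ c := by
  rw [← spanX_eq_vanishing]
  constructor
  · intro hf
    refine ⟨?_, fun i => pderiv_mem_pow _ i c f hf⟩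
    by_contra hc
    have := (mem_pow_span_X_iff _ f).1 hf 0 (MvPolynomial.mem_support_iff.2 hc)
    simp [Finsupp.degree] at this
  · rintro ⟨h0, hd⟩
    rw [mem_pow_span_X_iff]
    intro α hα
    have hαne : α ≠ 0 := by
      rintro rfl; exact (MvPolynomial.mem_support_iff.1 hα) h0
    obtain ⟨i, hi⟩ : ∃ i, α i ≠ 0 := by
      by_contra hc; push_neg at hc
      exact hαne (by ext j; simp [hc j])
    set β := α - Finsupp.single i 1 with hβ
    have hβα : β + Finsupp.single i 1 = α := by
      apply tsub_add_cancel_of_le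
      rw [Finsupp.single_le_iff]; omega
    have hcoeff : coeff β (pderiv i f) ≠ 0 := by
      rw [_root_.coeff_pderiv, hβα]
      exact mul_ne_zero (Nat.cast_ne_zero.2 (by omega)) (MvPolynomial.mem_support_iff.1 hα)
    have := (mem_pow_span_X_iff c _).1 (hd i) β (MvPolynomial.mem_support_iff.2 hcoeff)
    have hdeg : α.degree = β.degree + 1 := by
      rw [← hβα, degree_add, degree_single]
    omega

section Translation

variable [CharZero K]

/-- Translation by `p` as an algebra equivalence. -/
noncomputable def transEquiv (p : Fin n → K) :
    MvPolynomial (Fin n) K ≃ₐ[K] MvPolynomial (Fin n) K :=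
  AlgEquiv.ofAlgHom (aeval fun i => X i + C (p i)) (aeval fun i => X i - C (p i))
    (by ext i : 1; simp [MvPolynomial.algebraMap_eq])
    (by ext i : 1; simp [MvPolynomial.algebraMap_eq])

lemma transEquiv_apply (p : Fin n → K) (f : MvPolynomial (Fin n) K) :
    transEquiv p f = aeval (fun i => X i + C (p i)) f := rfl

lemma pderiv_transEquiv_X (p : Fin n → K) (i j : Fin n) :
    pderiv i (transEquiv p (X j)) = transEquiv p (pderiv i (X j)) := by
  classical
  by_cases h : j = i
  · subst h
    simp [transEquiv_apply, pderiv_C]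
  · simp [transEquiv_apply, pderiv_X_of_ne h, pderiv_C]

lemma pderiv_transEquiv (p : Fin n → K) (i : Fin n) (f : MvPolynomial (Fin n) K) :
    pderiv i (transEquiv p f) = transEquiv p (pderiv i f) := by
  induction f using MvPolynomial.induction_on with
  | C a =>
    simp only [transEquiv_apply, aeval_C, MvPolynomial.algebraMap_eq, pderiv_C, map_zero]
  | add f g hf hg => simp only [map_add, hf, hg]
  | mul_X q j hq =>
    rw [map_mul, pderiv_mul, pderiv_mul, map_add, map_mul, map_mul, hq, pderiv_transEquiv_X]

lemma coeff_zero_eq_eval_zero' (g : MvPolynomial (Fin n) K) :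
    coeff 0 g = eval (0 : Fin n → K) g := by
  rw [eval_zero]
  exact (congrFun constantCoeff_eq g).symm

lemma eval_transEquiv (p : Fin n → K) (f : MvPolynomial (Fin n) K) :
    eval (0 : Fin n → K) (transEquiv p f) = eval p f := by
  induction f using MvPolynomial.induction_on with
  | C a =>
    simp only [transEquiv_apply, aeval_C, MvPolynomial.algebraMap_eq, eval_C]
  | add f g hf hg => simp only [map_add, hf, hg]
  | mul_X q j hq =>
    rw [map_mul, map_mul, hq, transEquiv_apply, aeval_X, map_add, eval_X, eval_C]
    simp

lemma mem_vanishing_pow_iff (p : Fin n → K) (c : ℕ) (f : MvPolynomial (Fin n) K) :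
    f ∈ _root_.vanishingIdeal p ^ c ↔
      transEquiv p f ∈ _root_.vanishingIdeal (0 : Fin n → K) ^ c := by
  set e := (transEquiv p).toRingEquiv with he
  have hcomap : Ideal.comap e (_root_.vanishingIdeal (0 : Fin n → K))
      = _root_.vanishingIdeal p := by
    ext g
    simp only [Ideal.mem_comap, _root_.vanishingIdeal, RingHom.mem_ker]
    have h2 : e g = transEquiv p g := rfl
    rw [h2, eval_transEquiv]
  have hmap : Ideal.map e.symm (_root_.vanishingIdeal (0 : Fin n → K))
      = _root_.vanishingIdeal p := by
    rw [Ideal.map_symm, hcomap]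
  calc f ∈ _root_.vanishingIdeal p ^ c
      ↔ f ∈ Ideal.map e.symm (_root_.vanishingIdeal (0 : Fin n → K) ^ c) := by
        rw [Ideal.map_pow, hmap]
    _ ↔ transEquiv p f ∈ _root_.vanishingIdeal (0 : Fin n → K) ^ c := by
        rw [Ideal.map_symm, Ideal.mem_comap]
        exact Iff.rfl

/-- Key lemma for a general point. -/
lemma mem_vanishing_pow_succ_iff (p : Fin n → K) (c : ℕ) (f : MvPolynomial (Fin n) K) :
    f ∈ _root_.vanishingIdeal p ^ (c + 1) ↔
      eval p f = 0 ∧ ∀ i, pderiv i f ∈ _root_.vanishingIdeal p ^ c := by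
  rw [mem_vanishing_pow_iff, key_zero]
  rw [coeff_zero_eq_eval_zero', eval_transEquiv]
  apply and_congr Iff.rfl
  apply forall_congr'
  intro i
  rw [mem_vanishing_pow_iff p c, pderiv_transEquiv]

end Translation

lemma delta_step [CharZero K] (I : Ideal (MvPolynomial (Fin n) K)) (p : Fin n → K)
    (c : ℕ) (hc : 1 ≤ c) :
    deltaOp I ≤ _root_.vanishingIdeal p ^ c ↔ I ≤ _root_.vanishingIdeal p ^ (c + 1) := by
  obtain ⟨c', rfl⟩ : ∃ c', c = c' + 1 := ⟨c - 1, by omega⟩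
  constructor
  · intro h f hf
    rw [mem_vanishing_pow_succ_iff]
    have hfm : f ∈ _root_.vanishingIdeal p ^ (c' + 1) :=
      h (Ideal.mem_sup_left hf)
    refine ⟨?_, fun i => ?_⟩
    · have h1 : f ∈ _root_.vanishingIdeal p := by
        have := Ideal.pow_le_pow_right (I := _root_.vanishingIdeal p)
          (show 1 ≤ c' + 1 by omega) hfm
        rwa [pow_one] at this
      exact h1
    · exact h (Ideal.mem_sup_right (Ideal.subset_span ⟨f, hf, i, rfl⟩))
  · intro h
    refine sup_le (le_trans h (Ideal.pow_le_pow_right (by omega))) ?_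
    rw [Ideal.span_le]
    rintro g ⟨f, hfI, i, rfl⟩
    exact pderiv_mem_pow _ i _ f (h hfI)

lemma delta_iterate [CharZero K] (p : Fin n → K) :
    ∀ (a : ℕ) (I : Ideal (MvPolynomial (Fin n) K)),
      deltaOp^[a] I ≤ _root_.vanishingIdeal p ↔ I ≤ _root_.vanishingIdeal p ^ (a + 1) := by
  intro a
  induction a with
  | zero => intro I; simp
  | succ a ih =>
    intro I
    rw [Function.iterate_succ_apply, ih (deltaOp I), delta_step I p (a + 1) (by omega)]

end Aux

/-- For a field `K` of characteristic zero, an ideal `I` of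
`K[x₁,…,xₙ]`, an integer `b ≥ 1` and a point `p ∈ Kⁿ`, one has
`Δ^{b−1}(I) ⊆ m_p` if and only if `I ⊆ m_p^b`. -/
theorem stmt_0 {K : Type*} [Field K] [CharZero K] {n : ℕ}
    (I : Ideal (MvPolynomial (Fin n) K)) (b : ℕ) (hb : 1 ≤ b) (p : Fin n → K) :
    deltaOp^[b - 1] I ≤ vanishingIdeal p ↔ I ≤ vanishingIdeal p ^ b := by
  obtain ⟨a, rfl⟩ : ∃ a, b = a + 1 := ⟨b - 1, by omega⟩
  simpa using delta_iterate p a I
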